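/- arXiv:0901.1061 — 2 statements merged into one kernel-verified Lean document; each statement's English description precedes it below -/
import Mathlib

section
/- (Dubois-Violette–Popov) Let V = ℂ^n, N ≥ 2 an integer, and R ⊆ V^{⊗N} a linear subspace. Suppose that for every integer m ≥ 1 the Koszul complex K(A)_m of total degree m of the N-homogeneous algebra A = A(V,R) is exact at every position (including surjectivity of A_{m-1} ⊗ V → A_m at position 0). Then the identity (∑_{k≥0} dim_ℂ(A_k) t^k) · (∑_{ℓ≥0} (-1)^ℓ dim_ℂ(W_{ν_N(ℓ)}) t^{ν_N(ℓ)}) = 1 holds in the formal power series ring ℤ[[t]]. -/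
open scoped TensorProduct

/-- The `k`-th tensor power `V^{⊗k}` of `V = ℂ^n`, realized concretely as the space
of `ℂ`-valued functions on words of length `k` in the letters `{1,…,n}`. -/
abbrev TP (n k : ℕ) := (Fin k → Fin n) → ℂ

/-- The concatenation (tensor) product `V^{⊗k} × V^{⊗l} → V^{⊗m}` for `k + l = m`. -/
noncomputable def mulT {n k l m : ℕ} (h : k + l = m) (f : TP n k) (g : TP n l) : TP n m :=
  fun w => f (fun i => w (Fin.cast h (Fin.castAdd l i))) *
           g (fun i => w (Fin.cast h (Fin.natAdd k i)))

/-- The slice map `V^{⊗m} → V^{⊗N}` extracting the coefficient function of the middle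
block, the prefix word `p` (length `a`) and suffix word `s` (length `b`) being fixed. -/
noncomputable def sliceMap (n N : ℕ) {a b m : ℕ} (h : a + N + b = m)
    (p : Fin a → Fin n) (s : Fin b → Fin n) : TP n m →ₗ[ℂ] TP n N :=
  LinearMap.funLeft ℂ ℂ (fun u => (Fin.append (Fin.append p u) s) ∘ Fin.cast h.symm)

/-- The subspace `V^{⊗a} ⊗ R ⊗ V^{⊗b}` of `V^{⊗m}` (for `a + N + b = m`), described as
the set of tensors all of whose middle slices lie in `R ⊆ V^{⊗N}`. -/
noncomputable def midSub (n N : ℕ) (R : Submodule ℂ (TP n N)) {a b m : ℕ}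
    (h : a + N + b = m) : Submodule ℂ (TP n m) :=
  ⨅ (p : Fin a → Fin n) (s : Fin b → Fin n), R.comap (sliceMap n N h p s)

/-- The degree-`k` part `∑_{a+N+b=k} V^{⊗a} ⊗ R ⊗ V^{⊗b}` of the two-sided ideal `(R)`. -/
noncomputable def idealSub (n N : ℕ) (R : Submodule ℂ (TP n N)) (k : ℕ) :
    Submodule ℂ (TP n k) :=
  ⨆ (ab : ℕ × ℕ) (h : ab.1 + N + ab.2 = k), midSub n N R h

/-- The degree-`k` homogeneous component `A_k = V^{⊗k} / ∑_{a+N+b=k} V^{⊗a} ⊗ R ⊗ V^{⊗b}`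
of the `N`-homogeneous algebra `A = A(V,R)`. -/
noncomputable abbrev Acomp (n N : ℕ) (R : Submodule ℂ (TP n N)) (k : ℕ) :=
  TP n k ⧸ idealSub n N R k

/-- `W_m = ⋂_{a+N+b=m} V^{⊗a} ⊗ R ⊗ V^{⊗b}` (so `W_m = V^{⊗m}` for `m < N`). -/
noncomputable def Wcomp (n N : ℕ) (R : Submodule ℂ (TP n N)) (m : ℕ) :
    Submodule ℂ (TP n m) :=
  ⨅ (ab : ℕ × ℕ) (h : ab.1 + N + ab.2 = m), midSub n N R h

/-- The jump map `ν_N : ℕ → ℕ`, `ν_N(2i) = Ni`, `ν_N(2i+1) = Ni + 1`. -/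
def nuN (N l : ℕ) : ℕ := N * (l / 2) + l % 2

/-- `KoszulDiff n N R m d` says that `d ℓ` is, for each `ℓ` with `ν_N(ℓ+1) ≤ m`, the
Koszul differential `A_{m-ν_N(ℓ+1)} ⊗ W_{ν_N(ℓ+1)} → A_{m-ν_N(ℓ)} ⊗ W_{ν_N(ℓ)}` of the
total-degree-`m` part `K(A)_m` of the Koszul complex: writing `w ∈ W_{ν_N(ℓ+1)}` as
`∑ᵢ vᵢ ⊗ wᵢ` with `vᵢ ∈ V^{⊗s}`, `wᵢ ∈ W_{ν_N(ℓ)}` (`s = ν_N(ℓ+1) − ν_N(ℓ)`), it sends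
`(class of u) ⊗ w` to `∑ᵢ (class of u·vᵢ) ⊗ wᵢ`. -/
noncomputable def KoszulDiff (n N : ℕ) (R : Submodule ℂ (TP n N)) (m : ℕ)
    (d : ∀ ℓ : ℕ,
      (Acomp n N R (m - nuN N (ℓ+1)) ⊗[ℂ] Wcomp n N R (nuN N (ℓ+1))) →ₗ[ℂ]
      (Acomp n N R (m - nuN N ℓ) ⊗[ℂ] Wcomp n N R (nuN N ℓ))) : Prop :=
  ∀ (ℓ : ℕ), nuN N (ℓ+1) ≤ m →
    ∀ (hs : (nuN N (ℓ+1) - nuN N ℓ) + nuN N ℓ = nuN N (ℓ+1))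
      (hk : (m - nuN N (ℓ+1)) + (nuN N (ℓ+1) - nuN N ℓ) = m - nuN N ℓ)
      (u : TP n (m - nuN N (ℓ+1))) (w : Wcomp n N R (nuN N (ℓ+1)))
      (q : ℕ) (v : Fin q → TP n (nuN N (ℓ+1) - nuN N ℓ))
      (w' : Fin q → Wcomp n N R (nuN N ℓ)),
      (w : TP n (nuN N (ℓ+1))) = ∑ i, mulT hs (v i) (w' i) →
      d ℓ ((idealSub n N R _).mkQ u ⊗ₜ[ℂ] w) =
        ∑ i, (idealSub n N R _).mkQ (mulT hk u (v i)) ⊗ₜ[ℂ] w' i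


private lemma le_nuN {N : ℕ} (hN : 2 ≤ N) (ℓ : ℕ) : ℓ ≤ nuN N ℓ := by
  have h : 2 * (ℓ / 2) ≤ N * (ℓ / 2) := Nat.mul_le_mul_right _ hN
  unfold nuN; omega

private lemma nuN_strictMono {N : ℕ} (hN : 2 ≤ N) : StrictMono (nuN N) := by
  apply strictMono_nat_of_lt_succ
  intro ℓ
  unfold nuN
  rcases Nat.even_or_odd ℓ with ⟨i, hi⟩ | ⟨i, hi⟩
  · subst hi
    have h1 : (i + i) / 2 = i := by omega
    have h2 : (i + i + 1) / 2 = i := by omega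
    rw [h1, h2]; omega
  · subst hi
    have h1 : (2 * i + 1) / 2 = i := by omega
    have h2 : (2 * i + 1 + 1) / 2 = i + 1 := by omega
    rw [h1, h2]
    have h3 : N * (i + 1) = N * i + N := by ring
    omega

private lemma euler_char (C : ℕ → Type) [∀ i, AddCommGroup (C i)] [∀ i, Module ℂ (C i)]
    [∀ i, FiniteDimensional ℂ (C i)]
    (d : ∀ ℓ, C (ℓ + 1) →ₗ[ℂ] C ℓ) (L : ℕ) (hL : 1 ≤ L)
    (h0 : Function.Surjective (d 0))
    (hex : ∀ ℓ, ℓ + 2 ≤ L → LinearMap.ker (d ℓ) = LinearMap.range (d (ℓ + 1)))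
    (htp : LinearMap.ker (d (L - 1)) = ⊥) :
    ∑ ℓ ∈ Finset.range (L + 1), (-1 : ℤ) ^ ℓ * (Module.finrank ℂ (C ℓ) : ℤ) = 0 := by
  obtain ⟨L, rfl⟩ : ∃ L', L = L' + 1 := ⟨L - 1, by omega⟩
  have key : ∀ ℓ, ℓ + 1 ≤ L + 1 →
      ∑ j ∈ Finset.range (ℓ + 1), (-1 : ℤ) ^ j * (Module.finrank ℂ (C j) : ℤ)
        = (-1 : ℤ) ^ ℓ * (Module.finrank ℂ (LinearMap.range (d ℓ)) : ℤ) := by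
    intro ℓ
    induction ℓ with
    | zero =>
      intro _
      rw [Finset.sum_range_one, LinearMap.range_eq_top.mpr h0, finrank_top]
    | succ ℓ ih =>
      intro h
      rw [Finset.sum_range_succ, ih (by omega)]
      have hrn0 := LinearMap.finrank_range_add_finrank_ker (d ℓ)
      rw [hex ℓ (by omega)] at hrn0
      have hc : (Module.finrank ℂ (LinearMap.range (d ℓ)) : ℤ)
          + (Module.finrank ℂ (LinearMap.range (d (ℓ + 1))) : ℤ)
          = (Module.finrank ℂ (C (ℓ + 1)) : ℤ) := by exact_mod_cast hrn0
      rw [pow_succ]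
      linear_combination ((-1 : ℤ) ^ ℓ) * hc
  rw [Finset.sum_range_succ, key L (by omega)]
  have hrn := LinearMap.finrank_range_add_finrank_ker (d L)
  have htp' : LinearMap.ker (d L) = ⊥ := by simpa using htp
  rw [htp', finrank_bot] at hrn
  have : (Module.finrank ℂ (LinearMap.range (d L)) : ℤ)
      = (Module.finrank ℂ (C (L + 1)) : ℤ) := by exact_mod_cast by omega
  rw [this, pow_succ]; ring


/-- **Dubois-Violette–Popov numerical Hilbert series identity.**
Let `V = ℂ^n`, `N ≥ 2`, `R ⊆ V^{⊗N}`, and suppose that for every `m ≥ 1` the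
total-degree-`m` part `K(A)_m` of the Koszul complex of `A = A(V,R)` is exact at every
position (surjectivity of `d 0 : A_{m-1} ⊗ W_1 → A_m ⊗ W_0` at position `0`, exactness
`ker = range` at the interior positions, and injectivity at the top position, i.e. at
the largest `ℓ` with `ν_N(ℓ) ≤ m`, where the incoming term of `K(A)_m` vanishes).  Then
`(∑_{k≥0} dim A_k tᵏ) · (∑_{ℓ≥0} (-1)^ℓ dim W_{ν_N(ℓ)} t^{ν_N(ℓ)}) = 1` in `ℤ[[t]]`. -/
theorem duboisViolette_popov (n N : ℕ) (hN : 2 ≤ N) (R : Submodule ℂ (TP n N))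
    (d : ∀ m ℓ : ℕ,
      (Acomp n N R (m - nuN N (ℓ+1)) ⊗[ℂ] Wcomp n N R (nuN N (ℓ+1))) →ₗ[ℂ]
      (Acomp n N R (m - nuN N ℓ) ⊗[ℂ] Wcomp n N R (nuN N ℓ)))
    (hd : ∀ m : ℕ, KoszulDiff n N R m (d m))
    (hsurj : ∀ m : ℕ, 1 ≤ m → Function.Surjective (d m 0))
    (hexact : ∀ m : ℕ, 1 ≤ m → ∀ ℓ : ℕ, nuN N (ℓ+2) ≤ m →
      LinearMap.ker (d m ℓ) = LinearMap.range (d m (ℓ+1)))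
    (htop : ∀ m : ℕ, 1 ≤ m → ∀ ℓ : ℕ, nuN N (ℓ+1) ≤ m → m < nuN N (ℓ+2) →
      LinearMap.ker (d m ℓ) = ⊥) :
    (PowerSeries.mk fun k => (Module.finrank ℂ (Acomp n N R k) : ℤ)) *
      (PowerSeries.mk fun j => ∑ ℓ ∈ Finset.range (j + 1),
        if nuN N ℓ = j then (-1 : ℤ) ^ ℓ * (Module.finrank ℂ (Wcomp n N R j) : ℤ)
        else 0) = 1 := by
  ext m
  rw [mul_comm, PowerSeries.coeff_mul, PowerSeries.coeff_one]
  simp only [PowerSeries.coeff_mk]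
  rcases Nat.eq_zero_or_pos m with rfl | hm
  · -- m = 0
    simp only [Finset.Nat.antidiagonal_zero, Finset.sum_singleton, if_pos rfl]
    have hnu0 : nuN N 0 = 0 := by simp [nuN]
    have hA0 : Module.finrank ℂ (Acomp n N R 0) = 1 := by
      have hbot : idealSub n N R 0 = ⊥ := by
        rw [eq_bot_iff]
        exact iSup_le fun ab => iSup_le fun h => absurd h (by omega)
      rw [(Submodule.quotEquivOfEqBot _ hbot).finrank_eq]
      simp [TP, Module.finrank_fintype_fun_eq_card]
    have hW0 : Module.finrank ℂ (Wcomp n N R 0) = 1 := by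
      have htW : Wcomp n N R 0 = ⊤ := by
        rw [eq_top_iff]
        exact le_iInf fun ab => le_iInf fun h => absurd h (by omega)
      rw [htW, finrank_top]
      simp [TP, Module.finrank_fintype_fun_eq_card]
    simp [hnu0, hA0, hW0]
  · -- m ≥ 1
    rw [if_neg (by omega)]
    have hP0 : nuN N 0 ≤ m := by simp [nuN]
    have hP1 : nuN N 1 ≤ m := by simpa [nuN] using (show 1 ≤ m by omega)
    set L : ℕ := Nat.findGreatest (fun ℓ => nuN N ℓ ≤ m) m with hLdef
    have hLm : L ≤ m := Nat.findGreatest_le m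
    have hνL : nuN N L ≤ m :=
      Nat.findGreatest_spec (P := fun ℓ => nuN N ℓ ≤ m) (Nat.zero_le m) hP0
    have hL1 : 1 ≤ L := by
      by_contra h
      exact Nat.findGreatest_is_greatest (P := fun ℓ => nuN N ℓ ≤ m)
        (show L < 1 by omega) hm hP1
    have hgt : m < nuN N (L + 1) := by
      by_cases h : L + 1 ≤ m
      · have h2 : ¬ (nuN N (L + 1) ≤ m) :=
          Nat.findGreatest_is_greatest (P := fun ℓ => nuN N ℓ ≤ m)
            (show L < L + 1 by omega) h
        omega
      · have := le_nuN hN (L + 1)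
        omega
    have hiff : ∀ ℓ, ℓ ≤ m → (nuN N ℓ ≤ m ↔ ℓ ≤ L) := by
      intro ℓ hℓ
      constructor
      · intro h
        by_contra hc
        exact Nat.findGreatest_is_greatest (P := fun ℓ => nuN N ℓ ≤ m)
          (show L < ℓ by omega) hℓ h
      · intro h
        exact le_trans ((nuN_strictMono hN).monotone h) hνL
    -- the Euler characteristic identity
    have heuler :
        ∑ ℓ ∈ Finset.range (L + 1), (-1 : ℤ) ^ ℓ *
          (Module.finrank ℂ
            (Acomp n N R (m - nuN N ℓ) ⊗[ℂ] Wcomp n N R (nuN N ℓ)) : ℤ) = 0 := by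
      refine euler_char
        (fun ℓ => Acomp n N R (m - nuN N ℓ) ⊗[ℂ] Wcomp n N R (nuN N ℓ))
        (d m) L hL1 (hsurj m hm) (fun ℓ h => hexact m hm ℓ
          (le_trans ((nuN_strictMono hN).monotone h) hνL)) ?_
      have h1 : L - 1 + 1 = L := by omega
      have h2 : L - 1 + 2 = L + 1 := by omega
      exact htop m hm (L - 1) (by rw [h1]; exact hνL) (by rw [h2]; exact hgt)
    -- rewrite the coefficient sum
    rw [Finset.Nat.sum_antidiagonal_eq_sum_range_succ_mk]
    have step1 : ∀ k ∈ Finset.range (m + 1),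
        (∑ ℓ ∈ Finset.range (k + 1),
            if nuN N ℓ = k then (-1 : ℤ) ^ ℓ * (Module.finrank ℂ (Wcomp n N R k) : ℤ)
            else 0) * (Module.finrank ℂ (Acomp n N R (m - k)) : ℤ)
        = ∑ ℓ ∈ Finset.range (m + 1),
            if nuN N ℓ = k then
              (-1 : ℤ) ^ ℓ * (Module.finrank ℂ (Wcomp n N R k) : ℤ)
                * (Module.finrank ℂ (Acomp n N R (m - k)) : ℤ)
            else 0 := by
      intro k hk
      simp only [Finset.mem_range] at hk
      have hsub : Finset.range (k + 1) ⊆ Finset.range (m + 1) :=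
        Finset.range_subset_range.mpr (by omega)
      rw [Finset.sum_mul]
      rw [Finset.sum_subset hsub]
      · exact Finset.sum_congr rfl fun ℓ _ => by
          split <;> simp
      · intro ℓ hℓ hℓ'
        simp only [Finset.mem_range, not_lt] at hℓ hℓ'
        have : nuN N ℓ ≠ k := by
          have := le_nuN hN ℓ; omega
        simp [this]
    rw [Finset.sum_congr rfl step1, Finset.sum_comm]
    have step2 : ∀ ℓ ∈ Finset.range (m + 1),
        (∑ k ∈ Finset.range (m + 1),
          if nuN N ℓ = k then
            (-1 : ℤ) ^ ℓ * (Module.finrank ℂ (Wcomp n N R k) : ℤ)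
              * (Module.finrank ℂ (Acomp n N R (m - k)) : ℤ)
          else 0)
        = if ℓ ∈ Finset.range (L + 1) then
            (-1 : ℤ) ^ ℓ * (Module.finrank ℂ (Wcomp n N R (nuN N ℓ)) : ℤ)
              * (Module.finrank ℂ (Acomp n N R (m - nuN N ℓ)) : ℤ)
          else 0 := by
      intro ℓ hℓ
      rw [Finset.sum_ite_eq]
      simp only [Finset.mem_range] at hℓ ⊢
      have := hiff ℓ (by omega)
      by_cases h : ℓ ≤ L
      · rw [if_pos (by omega), if_pos (by omega)]
      · rw [if_neg (by omega), if_neg (by omega)]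
    rw [Finset.sum_congr rfl step2, Finset.sum_ite_mem,
      Finset.inter_eq_right.mpr (Finset.range_subset_range.mpr (by omega))]
    rw [← heuler]
    refine Finset.sum_congr rfl fun ℓ _ => ?_
    rw [Module.finrank_tensorProduct]
    push_cast
    ring
end

section
/- Let 2 ≤ N ≤ n be integers. Then the identity (∑_{k≥0} L(n,N,k) t^k) · (∑_{ℓ≥0} (-1)^ℓ C(n, ν_N(ℓ)) t^{ν_N(ℓ)}) = 1 holds in the formal power series ring ℤ[[t]], with the convention C(n,j) = 0 for j > n. Equivalently, ∑_{k≥0} L(n,N,k) t^k = (1 − n t + C(n,N) t^N − C(n,N+1) t^{N+1} + C(n,2N) t^{2N} − C(n,2N+1) t^{2N+1} + ⋯)^{-1}. -/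
/-- A word with letters in `{1,…,n}` (modeled as `Fin n`) is admissible if it contains
no `N`-descent, i.e. no contiguous strictly decreasing subword of length `N`. -/
def Admissible (n N : ℕ) (l : List (Fin n)) : Prop :=
  ¬ ∃ w : List (Fin n), w.length = N ∧ w.Chain' (· > ·) ∧ w <:+: l

/-- `L n N k` is the number of admissible words of length `k` with letters in `{1,…,n}`. -/
noncomputable def Lword (n N k : ℕ) : ℕ :=
  Nat.card {l : List (Fin n) // l.length = k ∧ Admissible n N l}

namespace AntiSym
open List Finset

variable {n N : ℕ}

def Adm' (N : ℕ) (l : List (Fin n)) : Prop :=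
  ∀ t, t <:+ l → N ≤ t.length → ¬ (t.take N).Chain' (· > ·)

def Bd (u w : List (Fin n)) : Prop := ∀ a ∈ u.getLast?, ∀ b ∈ w.head?, ¬ b < a

lemma adm_iff (l : List (Fin n)) : Admissible n N l ↔ Adm' N l := by
  constructor
  · intro h t ht hlen hch
    exact h ⟨t.take N, by simp [hlen], hch,
      List.infix_iff_prefix_suffix.2 ⟨t, List.take_prefix _ _, ht⟩⟩
  · rintro h ⟨w, hw, hch, hinf⟩
    obtain ⟨t, hpre, hsuf⟩ := List.infix_iff_prefix_suffix.1 hinf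
    have hlen : N ≤ t.length := hw ▸ hpre.length_le
    have : t.take N = w := by
      have := List.prefix_iff_eq_take.1 hpre
      rw [hw] at this; exact this.symm
    exact h t hsuf hlen (this ▸ hch)

lemma Adm'.suffix {l t : List (Fin n)} (h : Adm' N l) (ht : t <:+ l) : Adm' N t :=
  fun s hs => h s (hs.trans ht)

lemma adm'_nil (hN : 2 ≤ N) : Adm' N ([] : List (Fin n)) := by
  intro t ht hlen
  rw [List.suffix_nil.1 ht] at hlen
  simp at hlen; omega

lemma getLast?_of_suffix {s l : List (Fin n)} (h : s <:+ l) (hs : s ≠ []) :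
    l.getLast? = s.getLast? := by
  obtain ⟨p, rfl⟩ := h
  rw [List.getLast?_append]
  obtain ⟨x, hx⟩ := Option.isSome_iff_exists.1 (List.getLast?_isSome.2 hs)
  simp [hx]

lemma Bd.of_tail {u w : List (Fin n)} (h : Bd u w) : Bd u.tail w := by
  intro a ha
  match u with
  | [] => simp at ha
  | [x] => simp at ha
  | x :: y :: t => exact h a (by rwa [List.getLast?_cons_cons])

lemma bd_tail_iff {u w : List (Fin n)} (hu : u.tail ≠ []) : Bd u.tail w ↔ Bd u w := by
  have : u.getLast? = u.tail.getLast? := by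
    apply getLast?_of_suffix _ hu
    exact List.tail_suffix u
  unfold Bd; rw [this]

lemma adm'_cons_iff {x : Fin n} {w : List (Fin n)} :
    Adm' N (x :: w) ↔ Adm' N w ∧ ¬ (N ≤ w.length + 1 ∧ ((x :: w).take N).Chain' (· > ·)) := by
  constructor
  · intro h
    refine ⟨h.suffix ⟨[x], rfl⟩, fun ⟨h1, h2⟩ => ?_⟩
    exact h (x :: w) suffix_rfl (by simpa using h1) h2
  · rintro ⟨hw, hx⟩ t ht hlen hch
    rcases List.suffix_cons_iff.1 ht with rfl | ht
    · exact hx ⟨by simpa using hlen, hch⟩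
    · exact hw t ht hlen hch

lemma adm'_append_iff (hN : 2 ≤ N) {u w : List (Fin n)} (hu : u.Chain' (· > ·))
    (hlen : u.length = N - 1) :
    Adm' N (u ++ w) ↔ Adm' N w ∧ Bd u w := by
  have hune : u ≠ [] := by
    intro h; rw [h] at hlen; simp at hlen; omega
  constructor
  · intro h
    refine ⟨h.suffix (List.suffix_append u w), ?_⟩
    intro a ha b hb hba
    have hwne : w ≠ [] := by intro h; subst h; simp at hb
    refine h (u ++ w) suffix_rfl ?_ ?_
    · rw [List.length_append]
      have : 1 ≤ w.length := List.length_pos_iff.2 hwne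
      omega
    · rw [List.take_append, hlen, List.take_of_length_le (by omega)]
      have h1 : N - (N - 1) = 1 := by omega
      rw [h1]
      have hw1 : w.take 1 = [b] := by
        cases w with
        | nil => simp at hb
        | cons c w' =>
            simp only [Option.mem_def, List.head?_cons, Option.some_inj] at hb
            rw [hb]; rfl
      rw [hw1, List.Chain', List.isChain_append]
      refine ⟨hu, List.isChain_singleton b, ?_⟩
      intro x hx y hy
      simp only [Option.mem_def] at ha hx hy
      rw [ha, Option.some_inj] at hx
      simp only [List.head?_cons, Option.some_inj] at hy
      subst hx; subst hy; exact hba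
  · rintro ⟨hw, hbd⟩ t ht hlen' hch
    obtain ⟨k, hk⟩ : ∃ k, t = (u ++ w).drop k := ⟨_, List.suffix_iff_eq_drop.1 ht⟩
    rw [List.drop_append] at hk
    by_cases hku : k < u.length
    · have hk0 : k - u.length = 0 := by omega
      rw [hk0, List.drop_zero] at hk
      set u' := u.drop k with hu'
      have hu'ne : u' ≠ [] := by
        intro hh
        have h2 : u'.length = u.length - k := List.length_drop
        rw [hh] at h2; simp at h2; omega
      have hlu' : u'.length = u.length - k := List.length_drop
      -- take N t = u' ++ w.take (N - u'.length)
      have htake : t.take N = u' ++ w.take (N - u'.length) := by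
        rw [hk, List.take_append, List.take_of_length_le (by omega)]
      rw [htake, List.Chain', List.isChain_append] at hch
      obtain ⟨-, -, hbdy⟩ := hch
      -- w nonempty: from length
      have hwlen : 1 ≤ w.length := by
        rw [hk] at hlen'
        rw [List.length_append] at hlen'
        omega
      have hwne : w ≠ [] := by intro hh; rw [hh] at hwlen; simp at hwlen
      obtain ⟨b, w', rfl⟩ := List.exists_cons_of_ne_nil hwne
      obtain ⟨c, hc⟩ := Option.isSome_iff_exists.1 (List.getLast?_isSome.2 hu'ne)
      have hcu : u.getLast? = some c := by
        rw [getLast?_of_suffix (List.drop_suffix k u) hu'ne]; exact hc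
      have hNu' : N - u'.length ≠ 0 := by omega
      have hhead : ((b :: w').take (N - u'.length)).head? = some b := by
        rw [List.head?_take]; simp [hNu']
      exact hbd c hcu b rfl (hbdy c hc b hhead)
    · have : u.drop k = [] := List.drop_eq_nil_of_le (by omega)
      rw [this] at hk; simp at hk
      exact hw _ (hk ▸ List.drop_suffix _ _) hlen' hch



open scoped Classical

noncomputable def WF (n k : ℕ) : Finset (List (Fin n)) :=
  (Finset.univ : Finset (List.Vector (Fin n) k)).map ⟨List.Vector.toList, List.Vector.toList_injective⟩

lemma mem_WF {l : List (Fin n)} {k : ℕ} : l ∈ WF n k ↔ l.length = k := by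
  simp only [WF, Finset.mem_map, Finset.mem_univ, true_and, Function.Embedding.coeFn_mk]
  constructor
  · rintro ⟨v, -, rfl⟩; exact v.2
  · intro h; exact ⟨⟨l, h⟩, rfl⟩

noncomputable def AdmF (n N k : ℕ) : Finset (List (Fin n)) := (WF n k).filter (Adm' N)

noncomputable def Lf (n N k : ℕ) : ℕ := (AdmF n N k).card

noncomputable def DecF (n j : ℕ) : Finset (List (Fin n)) :=
  (WF n j).filter (fun u => u.Chain' (· > ·))

noncomputable def PairG (n N j m : ℕ) : Finset (List (Fin n) × List (Fin n)) :=
  ((WF n j) ×ˢ (WF n (m - j))).filter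
    (fun p => p.1.Chain' (· > ·) ∧ Adm' N p.2 ∧ Bd p.1 p.2)

noncomputable def PairQ (n N j m : ℕ) : Finset (List (Fin n) × List (Fin n)) :=
  ((WF n j) ×ˢ (WF n (m - j))).filter
    (fun p => p.1.Chain' (· > ·) ∧ Adm' N p.2 ∧ ¬ Bd p.1 p.2)

noncomputable def PairH (n N i m : ℕ) : Finset (List (Fin n) × List (Fin n)) :=
  ((WF n i) ×ˢ (WF n (m - i))).filter
    (fun p => p.1.Chain' (· > ·) ∧ ∀ c ∈ p.1.getLast?, Adm' N (c :: p.2))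

noncomputable def PairH' (n N i m : ℕ) : Finset (List (Fin n) × List (Fin n)) :=
  ((WF n i) ×ˢ (WF n (m - i))).filter
    (fun p => p.1.Chain' (· > ·) ∧ Adm' N p.2 ∧ ¬ ∀ c ∈ p.1.getLast?, Adm' N (c :: p.2))

lemma Lword_eq_Lf (k : ℕ) : Lword n N k = Lf n N k := by
  rw [Lword, Lf]
  rw [Nat.card_congr (Equiv.subtypeEquivRight (q := fun l => l ∈ AdmF n N k)
    (fun l => by simp [AdmF, mem_WF, adm_iff, Finset.mem_filter]))]
  exact Nat.card_eq_finsetCard _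

instance : IsAntisymm (Fin n) (· < ·) := ⟨fun a b h h' => (lt_asymm h h').elim⟩

lemma card_DecF (j : ℕ) : (DecF n j).card = n.choose j := by
  have := Finset.card_powersetCard j (Finset.univ : Finset (Fin n))
  rw [Finset.card_univ, Fintype.card_fin] at this
  rw [← this]
  refine Finset.card_bij' (fun l _ => l.toFinset)
    (fun s _ => (s.sort (· ≤ ·)).reverse) ?hi ?hj ?li ?ri
  case hi =>
    intro l hl
    simp only [DecF, Finset.mem_filter, mem_WF] at hl
    obtain ⟨hlen, hch⟩ := hl
    have hnd : l.Nodup := (List.isChain_iff_pairwise.1 hch).imp (fun h => (ne_of_gt h))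
    rw [Finset.mem_powersetCard]
    exact ⟨Finset.subset_univ _, by rw [List.toFinset_card_of_nodup hnd, hlen]⟩
  case hj =>
    intro s hs
    rw [Finset.mem_powersetCard] at hs
    simp only [DecF, Finset.mem_filter, mem_WF]
    constructor
    · rw [List.length_reverse, Finset.length_sort, hs.2]
    · rw [List.Chain', List.isChain_reverse]
      exact (List.sortedLT_iff_isChain.1 (Finset.sortedLT_sort s))
  case li =>
    intro l hl
    show (l.toFinset.sort (· ≤ ·)).reverse = l
    simp only [DecF, Finset.mem_filter, mem_WF] at hl
    obtain ⟨hlen, hch⟩ := hl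
    have hrev : l.reverse.Chain' (· < ·) := by rw [List.Chain', List.isChain_reverse]; exact hch
    have hsorted : l.reverse.Pairwise (· < ·) := List.isChain_iff_pairwise.1 hrev
    have hnd : l.reverse.Nodup := hsorted.imp (fun h => ne_of_lt h)
    have hperm : (l.toFinset.sort (· ≤ ·)) ~ l.reverse := by
      refine (Finset.sort_perm_toList _ _).trans ?_
      rw [show l.toFinset = l.reverse.toFinset by rw [List.toFinset_reverse]]
      exact List.toFinset_toList hnd
    have : (l.toFinset.sort (· ≤ ·)) = l.reverse :=
      List.Perm.eq_of_pairwise (fun a b _ _ h h' => absurd h (lt_asymm h')) (Finset.sortedLT_sort _).pairwise hsorted hperm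
    rw [this, List.reverse_reverse]
  case ri =>
    intro s hs
    show (s.sort (· ≤ ·)).reverse.toFinset = s
    rw [List.toFinset_reverse, Finset.sort_toFinset]

lemma E2 (j m : ℕ) :
    (PairG n N j m).card + (PairQ n N j m).card = n.choose j * Lf n N (m - j) := by
  classical
  set base := ((WF n j) ×ˢ (WF n (m - j))).filter
    (fun p : List (Fin n) × List (Fin n) => p.1.Chain' (· > ·) ∧ Adm' N p.2) with hbase
  have hG : PairG n N j m = base.filter (fun p => Bd p.1 p.2) := by
    ext p; simp [PairG, hbase, Finset.mem_filter, and_assoc]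
  have hQ : PairQ n N j m = base.filter (fun p => ¬ Bd p.1 p.2) := by
    ext p; simp only [PairQ, hbase, Finset.mem_filter, and_assoc]
  rw [hG, hQ]
  rw [Finset.card_filter_add_card_filter_not]
  have : base = (DecF n j) ×ˢ (AdmF n N (m - j)) := by
    ext p
    simp only [hbase, DecF, AdmF, Finset.mem_filter, Finset.mem_product]
    tauto
  rw [this, Finset.card_product, card_DecF, Lf]

lemma Bd.of_suffix' {u s w : List (Fin n)} (h : Bd u w) (hs : s <:+ u) (hne : s ≠ []) :
    Bd s w := by
  intro a ha
  exact h a (by rw [getLast?_of_suffix hs hne]; exact ha)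

lemma bd_append_iff {v u w : List (Fin n)} (hu : u ≠ []) : Bd (v ++ u) w ↔ Bd u w := by
  have h : (v ++ u).getLast? = u.getLast? := getLast?_of_suffix (List.suffix_append v u) hu
  unfold Bd; rw [h]

lemma tail_append_of_ne_nil {u w : List (Fin n)} (hu : u ≠ []) :
    (u ++ w).tail = u.tail ++ w := by
  cases u with
  | nil => simp at hu
  | cons a t => simp

lemma E1 (hN : 2 ≤ N) {m : ℕ} (hm : 1 ≤ m) :
    n * Lf n N (m - 1) = Lf n N m + (if N ≤ m then (PairG n N N m).card else 0) := by
  classical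
  set S1 := (WF n m).filter (fun v => Adm' N v.tail) with hS1
  -- Step 1 : S1.card = n * Lf n N (m-1)
  have step1 : S1.card = n * Lf n N (m - 1) := by
    rw [show n * Lf n N (m-1) = ((Finset.univ : Finset (Fin n)) ×ˢ AdmF n N (m-1)).card by
      rw [Finset.card_product, Finset.card_univ, Fintype.card_fin, Lf]]
    refine Finset.card_bij' (fun v hv => (v.head ?_, v.tail)) (fun p _ => p.1 :: p.2)
      ?hi ?hj ?li ?ri
    · -- v ≠ []
      rw [hS1, Finset.mem_filter, mem_WF] at hv
      intro hnil; rw [hnil] at hv; simp at hv; omega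
    case hi =>
      intro v hv
      rw [hS1, Finset.mem_filter, mem_WF] at hv
      rw [Finset.mem_product, AdmF, Finset.mem_filter (s := WF n (m-1)), mem_WF (k := m-1)]
      refine ⟨Finset.mem_univ _, ?_, hv.2⟩
      rw [List.length_tail, hv.1]
    case hj =>
      intro p hp
      rw [Finset.mem_product, AdmF, Finset.mem_filter, mem_WF] at hp
      rw [hS1, Finset.mem_filter, mem_WF]
      constructor
      · simp only [List.length_cons, hp.2.1]; omega
      · simpa using hp.2.2
    case li =>
      intro v hv
      exact List.cons_head_tail _
    case ri =>
      intro p hp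
      simp
  -- Step 2 : split S1 by admissibility
  have step2 : S1.card = Lf n N m + (S1.filter (fun v => ¬ Adm' N v)).card := by
    rw [← Finset.card_filter_add_card_filter_not (s := S1) (p := fun v => Adm' N v)]
    congr 1
    rw [Lf]; congr 1
    ext v
    simp only [hS1, AdmF, Finset.mem_filter, mem_WF, and_assoc]
    constructor
    · rintro ⟨h1, h2, h3⟩; exact ⟨h1, h3⟩
    · rintro ⟨h1, h3⟩; exact ⟨h1, h3.suffix (List.tail_suffix v), h3⟩
  -- Step 3 : the inadmissible part
  have step3 : (S1.filter (fun v => ¬ Adm' N v)).card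
      = (if N ≤ m then (PairG n N N m).card else 0) := by
    -- characterization of members
    have hmem : ∀ v ∈ S1.filter (fun v => ¬ Adm' N v),
        v.length = m ∧ Adm' N v.tail ∧ N ≤ m ∧ (v.take N).Chain' (· > ·) := by
      intro v hv
      rw [Finset.mem_filter, hS1, Finset.mem_filter, mem_WF] at hv
      obtain ⟨⟨hlen, htl⟩, hnadm⟩ := hv
      have hne : v ≠ [] := by intro h; rw [h] at hlen; simp at hlen; omega
      obtain ⟨x, t, rfl⟩ := List.exists_cons_of_ne_nil hne
      simp only [List.tail_cons] at htl
      rw [adm'_cons_iff, not_and, not_not] at hnadm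
      obtain ⟨h1, h2⟩ := hnadm htl
      simp only [List.length_cons] at hlen
      exact ⟨by simp [hlen], htl, by omega, h2⟩
    by_cases hNm : N ≤ m
    · rw [if_pos hNm]
      refine Finset.card_bij' (fun v _ => (v.take N, v.drop N)) (fun p _ => p.1 ++ p.2)
        ?hi ?hj ?li ?ri
      case hi =>
        intro v hv
        obtain ⟨hlen, htl, -, hch⟩ := hmem v hv
        have htkne : (v.take N).tail ≠ [] := by
          intro h
          have := congrArg List.length h
          rw [List.length_tail, List.length_take] at this
          simp at this; omega
        have htne : v.take N ≠ [] := by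
          intro h; exact htkne (by rw [h]; rfl)
        have hsplit : v.tail = (v.take N).tail ++ v.drop N := by
          conv_lhs => rw [← List.take_append_drop N v]
          exact tail_append_of_ne_nil htne
        rw [hsplit] at htl
        rw [adm'_append_iff hN hch.tail (by rw [List.length_tail, List.length_take]; omega)] at htl
        rw [PairG, Finset.mem_filter, Finset.mem_product, mem_WF, mem_WF]
        refine ⟨⟨by rw [List.length_take]; omega, by rw [List.length_drop, hlen]⟩, hch, htl.1, ?_⟩
        exact (bd_tail_iff htkne).1 htl.2
      case hj =>
        intro p hp
        rw [PairG, Finset.mem_filter, Finset.mem_product, mem_WF, mem_WF] at hp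
        obtain ⟨⟨hl1, hl2⟩, hch, hadm, hbd⟩ := hp
        have hune : p.1 ≠ [] := by intro h; rw [h] at hl1; simp at hl1; omega
        have htkne : p.1.tail ≠ [] := by
          intro h
          have := congrArg List.length h
          rw [List.length_tail, hl1] at this; simp at this; omega
        rw [Finset.mem_filter, hS1, Finset.mem_filter, mem_WF]
        refine ⟨⟨?_, ?_⟩, ?_⟩
        · rw [List.length_append, hl1, hl2]; omega
        · rw [tail_append_of_ne_nil hune, adm'_append_iff hN hch.tail (by rw [List.length_tail, hl1])]
          exact ⟨hadm, (bd_tail_iff htkne).2 hbd⟩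
        · intro hadm'
          refine hadm' (p.1 ++ p.2) List.suffix_rfl ?_ ?_
          · rw [List.length_append, hl1]; omega
          · rw [List.take_left' hl1]; exact hch
      case li =>
        intro v hv
        exact List.take_append_drop N v
      case ri =>
        intro p hp
        rw [PairG, Finset.mem_filter, Finset.mem_product, mem_WF, mem_WF] at hp
        show (List.take N (p.1 ++ p.2), List.drop N (p.1 ++ p.2)) = p
        rw [List.take_left' hp.1.1, List.drop_left' hp.1.1]
    · rw [if_neg hNm]
      rw [Finset.card_eq_zero]
      apply Finset.eq_empty_of_forall_notMem
      intro v hv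
      obtain ⟨-, -, h, -⟩ := hmem v hv
      exact hNm h
  rw [← step1, step2, step3]

lemma drop_length_sub_one {v : List (Fin n)} (hne : v ≠ []) :
    v.drop (v.length - 1) = [v.getLast hne] := by
  obtain ⟨u, a, hv⟩ : ∃ u a, v = u ++ [a] :=
    ⟨v.dropLast, v.getLast hne, (List.dropLast_append_getLast hne).symm⟩
  subst hv
  have h1 : (u ++ [a]).length - 1 = u.length := by simp
  rw [h1, List.drop_left, List.getLast_concat]

lemma E3 {j m : ℕ} (hj : 1 ≤ j) (hjm : j ≤ m) :
    (PairQ n N j m).card = if j < m then (PairH n N (j+1) m).card else 0 := by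
  classical
  by_cases hlt : j < m
  · rw [if_pos hlt]
    refine Finset.card_bij' (fun p _ => (p.1 ++ p.2.take 1, p.2.drop 1))
      (fun p _ => (p.1.dropLast, p.1.drop (p.1.length - 1) ++ p.2)) ?hi ?hj ?li ?ri
    case hi =>
      intro p hp
      rw [PairQ, Finset.mem_filter, Finset.mem_product, mem_WF, mem_WF] at hp
      obtain ⟨⟨hl1, hl2⟩, hch, hadm, hnbd⟩ := hp
      rw [Bd] at hnbd; push_neg at hnbd
      obtain ⟨a, ha, b, hb, hba⟩ := hnbd
      have hwne : p.2 ≠ [] := by intro h; rw [h] at hb; simp at hb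
      have htk : p.2.take 1 = [b] := by
        rw [← List.cons_head?_tail hb]; rfl
      show (p.1 ++ p.2.take 1, p.2.drop 1) ∈ PairH n N (j+1) m
      rw [PairH, Finset.mem_filter, Finset.mem_product, mem_WF, mem_WF]
      refine ⟨⟨?_, ?_⟩, ?_, ?_⟩
      · rw [List.length_append, hl1, htk]; rfl
      · rw [List.length_drop, hl2]; omega
      · rw [htk, List.Chain', List.isChain_append]
        refine ⟨hch, List.isChain_singleton b, ?_⟩
        intro x hx y hy
        rw [Option.mem_def, ha, Option.some_inj] at hx
        simp only [List.head?_cons, Option.mem_def, Option.some_inj] at hy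
        subst hx; subst hy; exact hba
      · intro c hc
        rw [htk, Option.mem_def, List.getLast?_concat, Option.some_inj] at hc
        subst hc
        rw [List.drop_one, List.cons_head?_tail hb]
        exact hadm
    case hj =>
      intro p hp
      rw [PairH, Finset.mem_filter, Finset.mem_product, mem_WF, mem_WF] at hp
      obtain ⟨⟨hl1, hl2⟩, hch, hall⟩ := hp
      have hne : p.1 ≠ [] := by
        intro h; rw [h] at hl1; simp at hl1
      have hdrop : p.1.drop (p.1.length - 1) = [p.1.getLast hne] := drop_length_sub_one hne
      have hdlne : p.1.dropLast ≠ [] := by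
        intro h
        have := congrArg List.length h
        rw [List.length_dropLast, hl1] at this; simp at this; omega
      have hchsplit := hch
      conv at hchsplit => rw [← List.dropLast_append_getLast hne]
      rw [List.Chain', List.isChain_append] at hchsplit
      show (p.1.dropLast, p.1.drop (p.1.length - 1) ++ p.2) ∈ PairQ n N j m
      rw [PairQ, Finset.mem_filter, Finset.mem_product, mem_WF, mem_WF]
      refine ⟨⟨?_, ?_⟩, ?_, ?_, ?_⟩
      · rw [List.length_dropLast, hl1]; omega
      · rw [List.length_append, hdrop, hl2]
        simp only [List.length_cons, List.length_nil]; omega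
      · exact hchsplit.1
      · rw [hdrop]
        rw [List.singleton_append]
        exact hall _ (List.getLast?_eq_getLast hne)
      · intro hbd
        have hamem : p.1.dropLast.getLast? = some (p.1.dropLast.getLast hdlne) :=
          List.getLast?_eq_getLast hdlne
        have hhd : (p.1.drop (p.1.length - 1) ++ p.2).head? = some (p.1.getLast hne) := by
          rw [hdrop]; rfl
        have hgt := hchsplit.2.2 _ hamem (p.1.getLast hne) (by simp)
        exact hbd _ hamem _ hhd hgt
    case li =>
      intro p hp
      rw [PairQ, Finset.mem_filter, Finset.mem_product, mem_WF, mem_WF] at hp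
      obtain ⟨⟨hl1, hl2⟩, hch, hadm, hnbd⟩ := hp
      rw [Bd] at hnbd; push_neg at hnbd
      obtain ⟨a, ha, b, hb, hba⟩ := hnbd
      have hwne : p.2 ≠ [] := by intro h; rw [h] at hb; simp at hb
      have htk : p.2.take 1 = [b] := by
        rw [← List.cons_head?_tail hb]; rfl
      show ((p.1 ++ p.2.take 1).dropLast,
        (p.1 ++ p.2.take 1).drop ((p.1 ++ p.2.take 1).length - 1) ++ p.2.drop 1) = p
      rw [htk, List.dropLast_concat, List.length_append, hl1]
      have : (j + [b].length - 1) = j := by simp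
      rw [this, List.drop_left' hl1, List.singleton_append, List.drop_one,
        List.cons_head?_tail hb]
    case ri =>
      intro p hp
      rw [PairH, Finset.mem_filter, Finset.mem_product, mem_WF, mem_WF] at hp
      obtain ⟨⟨hl1, hl2⟩, hch, hall⟩ := hp
      have hne : p.1 ≠ [] := by intro h; rw [h] at hl1; simp at hl1
      have hdrop : p.1.drop (p.1.length - 1) = [p.1.getLast hne] := drop_length_sub_one hne
      show (p.1.dropLast ++ (p.1.drop (p.1.length - 1) ++ p.2).take 1,
        (p.1.drop (p.1.length - 1) ++ p.2).drop 1) = p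
      rw [hdrop, List.singleton_append, List.take_succ_cons, List.take_zero,
        List.drop_one, List.tail_cons, List.dropLast_append_getLast hne]
  · rw [if_neg hlt]
    rw [Finset.card_eq_zero]
    apply Finset.eq_empty_of_forall_notMem
    intro p hp
    rw [PairQ, Finset.mem_filter, Finset.mem_product, mem_WF, mem_WF] at hp
    obtain ⟨⟨hl1, hl2⟩, hch, hadm, hnbd⟩ := hp
    have hj0 : m - j = 0 := by omega
    have : p.2 = [] := by
      rw [hj0] at hl2; exact List.length_eq_zero_iff.1 hl2
    apply hnbd
    intro a ha b hb
    rw [this] at hb; simp at hb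

lemma card_baseF (j k : ℕ) : (((WF n j) ×ˢ (WF n k)).filter
    (fun p : List (Fin n) × List (Fin n) => p.1.Chain' (· > ·) ∧ Adm' N p.2)).card
    = n.choose j * Lf n N k := by
  classical
  have : ((WF n j) ×ˢ (WF n k)).filter
      (fun p : List (Fin n) × List (Fin n) => p.1.Chain' (· > ·) ∧ Adm' N p.2)
      = (DecF n j) ×ˢ (AdmF n N k) := by
    ext p
    simp only [DecF, AdmF, Finset.mem_filter, Finset.mem_product]
    tauto
  rw [this, Finset.card_product, card_DecF, Lf]

lemma E4 (hN : 2 ≤ N) {i m : ℕ} (hi : 1 ≤ i) (him : i ≤ m) :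
    (PairH n N i m).card + (if i + N - 1 ≤ m then (PairG n N (i + N - 1) m).card else 0)
      = n.choose i * Lf n N (m - i) := by
  classical
  set base := ((WF n i) ×ˢ (WF n (m - i))).filter
    (fun p : List (Fin n) × List (Fin n) => p.1.Chain' (· > ·) ∧ Adm' N p.2) with hbase
  have hPH : PairH n N i m = base.filter (fun p => ∀ c ∈ p.1.getLast?, Adm' N (c :: p.2)) := by
    ext p
    simp only [PairH, hbase, Finset.mem_filter, Finset.mem_product, mem_WF, and_assoc]
    constructor
    · rintro ⟨h1, h2, h3, h4⟩
      have hne : p.1 ≠ [] := by intro h; rw [h] at h1; simp at h1; omega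
      refine ⟨h1, h2, h3, ?_, h4⟩
      exact (h4 _ (List.getLast?_eq_getLast hne)).suffix ⟨[p.1.getLast hne], rfl⟩
    · rintro ⟨h1, h2, h3, h4, h5⟩
      exact ⟨h1, h2, h3, h5⟩
  have hsplit := Finset.card_filter_add_card_filter_not
    (s := base) (p := fun p => ∀ c ∈ p.1.getLast?, Adm' N (c :: p.2))
  rw [← hPH] at hsplit
  rw [← card_baseF i (m - i), ← hbase, ← hsplit]
  have hrest : (base.filter (fun p => ¬ ∀ c ∈ p.1.getLast?, Adm' N (c :: p.2))).card
      = (if i + N - 1 ≤ m then (PairG n N (i + N - 1) m).card else 0) := by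
    have hext : ∀ p ∈ base.filter (fun p => ¬ ∀ c ∈ p.1.getLast?, Adm' N (c :: p.2)),
        ∃ hne : p.1 ≠ [], p.1.length = i ∧ p.2.length = m - i ∧ p.1.Chain' (· > ·) ∧
          Adm' N p.2 ∧ N - 1 ≤ p.2.length ∧
          (∀ y ∈ (p.2.take (N-1)).head?, p.1.getLast hne > y) ∧
          (p.2.take (N-1)).Chain' (· > ·) := by
      intro p hp
      rw [Finset.mem_filter, hbase, Finset.mem_filter, Finset.mem_product, mem_WF, mem_WF] at hp
      obtain ⟨⟨⟨hl1, hl2⟩, hch, hadm⟩, hncond⟩ := hp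
      have hne : p.1 ≠ [] := by intro h; rw [h] at hl1; simp at hl1; omega
      push_neg at hncond
      obtain ⟨c, hc, hnadm⟩ := hncond
      rw [Option.mem_def, List.getLast?_eq_getLast hne, Option.some_inj] at hc
      subst hc
      rw [adm'_cons_iff, not_and, not_not] at hnadm
      obtain ⟨hlen, hchc⟩ := hnadm hadm
      rw [show N = (N-1)+1 by omega, List.take_succ_cons] at hchc
      rw [List.Chain', List.isChain_cons] at hchc
      refine ⟨hne, hl1, hl2, hch, hadm, by omega, hchc.1, hchc.2⟩

    by_cases hcm : i + N - 1 ≤ m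
    · rw [if_pos hcm]
      refine Finset.card_bij' (fun p _ => (p.1 ++ p.2.take (N-1), p.2.drop (N-1)))
        (fun p _ => (p.1.take i, p.1.drop i ++ p.2)) ?hi ?hj ?li ?ri
      case hi =>
        intro p hp
        obtain ⟨hne, hl1, hl2, hch, hadm, hlN, hhd, hchtk⟩ := hext p hp
        have htklen : (p.2.take (N-1)).length = N - 1 := by
          rw [List.length_take]; omega
        have htkne : p.2.take (N-1) ≠ [] := by
          intro h; rw [h] at htklen; simp at htklen; omega
        have hadm2 := hadm
        conv at hadm2 => rw [← List.take_append_drop (N-1) p.2]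
        rw [adm'_append_iff hN hchtk htklen] at hadm2
        show (p.1 ++ p.2.take (N-1), p.2.drop (N-1)) ∈ PairG n N (i + N - 1) m
        rw [PairG, Finset.mem_filter, Finset.mem_product, mem_WF, mem_WF]
        refine ⟨⟨?_, ?_⟩, ?_, hadm2.1, ?_⟩
        · rw [List.length_append, hl1, htklen]; omega
        · rw [List.length_drop, hl2]; omega
        · rw [List.Chain', List.isChain_append]
          refine ⟨hch, hchtk, ?_⟩
          intro x hx y hy
          rw [Option.mem_def, List.getLast?_eq_getLast hne, Option.some_inj] at hx
          subst hx
          exact hhd y hy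
        · exact (bd_append_iff htkne).2 hadm2.2
      case hj =>
        intro p hp
        rw [PairG, Finset.mem_filter, Finset.mem_product, mem_WF, mem_WF] at hp
        obtain ⟨⟨hl1, hl2⟩, hch, hadm, hbd⟩ := hp
        have hdroplen : (p.1.drop i).length = N - 1 := by
          rw [List.length_drop, hl1]; omega
        have hdropne : p.1.drop i ≠ [] := by
          intro h; rw [h] at hdroplen; simp at hdroplen; omega
        have htkne : p.1.take i ≠ [] := by
          intro h
          have h2 := congrArg List.length h
          rw [List.length_take, hl1] at h2
          simp only [List.length_nil] at h2
          omega
        have hchsplit := hch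
        conv at hchsplit => rw [← List.take_append_drop i p.1]
        rw [List.Chain', List.isChain_append] at hchsplit
        show (p.1.take i, p.1.drop i ++ p.2) ∈ _
        rw [Finset.mem_filter, hbase, Finset.mem_filter, Finset.mem_product, mem_WF, mem_WF]
        refine ⟨⟨⟨?_, ?_⟩, ?_, ?_⟩, ?_⟩
        · rw [List.length_take, hl1]; omega
        · rw [List.length_append, hdroplen, hl2]; omega
        · exact hch.take i
        · rw [adm'_append_iff hN (hch.drop i) hdroplen]
          exact ⟨hadm, hbd.of_suffix' (List.drop_suffix i p.1) hdropne⟩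
        · intro hall
          have hcsome : (p.1.take i).getLast? = some ((p.1.take i).getLast htkne) :=
            List.getLast?_eq_getLast htkne
          have hadmc := hall _ hcsome
          refine hadmc (((p.1.take i).getLast htkne) :: (p.1.drop i ++ p.2)) List.suffix_rfl ?_ ?_
          · simp only [List.length_cons, List.length_append, hdroplen, hl2]; omega
          · rw [show N = (N-1)+1 by omega, List.take_succ_cons,
              List.take_append, hdroplen]
            have h0 : N - 1 - (N - 1) = 0 := by omega
            have hT : List.take (N-1) (p.1.drop i) = p.1.drop i :=
              List.take_of_length_le (le_of_eq hdroplen)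
            rw [hT, h0, List.take_zero, List.append_nil]
            rw [List.Chain', List.isChain_cons]
            refine ⟨?_, hch.drop i⟩
            intro y hy
            exact hchsplit.2.2 _ hcsome y hy
      case li =>
        intro p hp
        obtain ⟨hne, hl1, hl2, hch, hadm, hlN, hhd, hchtk⟩ := hext p hp
        show ((p.1 ++ p.2.take (N-1)).take i, (p.1 ++ p.2.take (N-1)).drop i ++ p.2.drop (N-1)) = p
        rw [List.take_left' hl1, List.drop_left' hl1, List.take_append_drop]
      case ri =>
        intro p hp
        rw [PairG, Finset.mem_filter, Finset.mem_product, mem_WF, mem_WF] at hp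
        obtain ⟨⟨hl1, hl2⟩, hch, hadm, hbd⟩ := hp
        have hdroplen : (p.1.drop i).length = N - 1 := by
          rw [List.length_drop, hl1]; omega
        have htklen : (p.1.take i).length = i := by
          rw [List.length_take, hl1]; omega
        show (p.1.take i ++ (p.1.drop i ++ p.2).take (N-1), (p.1.drop i ++ p.2).drop (N-1)) = p
        rw [List.take_left' hdroplen, List.drop_left' hdroplen, List.take_append_drop]
    · rw [if_neg hcm]
      rw [Finset.card_eq_zero]
      apply Finset.eq_empty_of_forall_notMem
      intro p hp
      obtain ⟨-, -, hl2, -, -, hlN, -⟩ := hext p hp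
      omega

  rw [hrest]

noncomputable def gI (n N m j : ℕ) : ℤ := if j ≤ m then ((PairG n N j m).card : ℤ) else 0

noncomputable def XI (n N m i : ℕ) : ℤ :=
  if N*i ≤ m then (n.choose (N*i) : ℤ) * (Lf n N (m - N*i) : ℤ) else 0

noncomputable def YI (n N m i : ℕ) : ℤ :=
  if N*i+1 ≤ m then (n.choose (N*i+1) : ℤ) * (Lf n N (m - (N*i+1)) : ℤ) else 0

lemma step' (hN : 2 ≤ N) (m j : ℕ) (hj : 2 ≤ j) :
    gI n N m j = (if j ≤ m then (n.choose j : ℤ) * (Lf n N (m - j) : ℤ) else 0)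
      - (if j+1 ≤ m then (n.choose (j+1) : ℤ) * (Lf n N (m - (j+1)) : ℤ) else 0)
      + gI n N m (j + N) := by
  by_cases hjm : j ≤ m
  · have hE2 := E2 (n := n) (N := N) j m
    have hE3 := E3 (n := n) (N := N) (j := j) (m := m) (by omega) hjm
    by_cases hlt : j < m
    · have hE4 := E4 (n := n) (N := N) hN (i := j+1) (m := m) (by omega) (by omega)
      rw [show j + 1 + N - 1 = j + N by omega] at hE4
      rw [if_pos hlt] at hE3
      rw [gI, gI, if_pos hjm, if_pos hjm, if_pos (by omega : j+1 ≤ m)]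
      by_cases hgm : j + N ≤ m
      · rw [if_pos hgm] at hE4 ⊢
        rw [← Nat.cast_mul, ← Nat.cast_mul]
        omega
      · rw [if_neg hgm] at hE4 ⊢
        rw [← Nat.cast_mul, ← Nat.cast_mul]
        omega
    · rw [if_neg hlt] at hE3
      rw [gI, gI, if_pos hjm, if_pos hjm, if_neg (by omega : ¬ j+1 ≤ m),
        if_neg (by omega : ¬ j + N ≤ m)]
      rw [← Nat.cast_mul]
      omega
  · rw [gI, gI, if_neg hjm, if_neg (by omega : ¬ j + N ≤ m), if_neg hjm,
      if_neg (by omega : ¬ j+1 ≤ m)]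
    ring

lemma tele (hN : 2 ≤ N) (m K : ℕ) :
    gI n N m N = (∑ i ∈ Finset.range K, (XI n N m (i+1) - YI n N m (i+1)))
      + gI n N m (N*(K+1)) := by
  induction K with
  | zero => simp [Nat.mul_one]
  | succ K ih =>
      rw [ih, Finset.sum_range_succ]
      have h2 : 2 ≤ N * (K+1) := by
        have := Nat.le_mul_of_pos_right N (show 0 < K+1 by omega)
        omega
      have h1 : gI n N m (N*(K+1)) = XI n N m (K+1) - YI n N m (K+1)
          + gI n N m (N*(K+2)) := by
        rw [XI, YI, show N*(K+2) = N*(K+1) + N by ring]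
        exact step' hN m (N*(K+1)) h2
      rw [h1]; ring

lemma gI_vanish (hN : 2 ≤ N) (m : ℕ) : gI n N m (N*(m+1)) = 0 := by
  have : 2*(m+1) ≤ N*(m+1) := Nat.mul_le_mul_right _ hN
  rw [gI, if_neg (by omega)]

lemma sum_range_two_mul (g : ℕ → ℤ) (K : ℕ) :
    ∑ ℓ ∈ Finset.range (2*K), g ℓ = ∑ i ∈ Finset.range K, (g (2*i) + g (2*i+1)) := by
  induction K with
  | zero => simp
  | succ K ih =>
      rw [show 2*(K+1) = (2*K+1)+1 by ring, Finset.sum_range_succ, Finset.sum_range_succ,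
        ih, Finset.sum_range_succ]
      ring

lemma le_nuN (hN : 2 ≤ N) (ℓ : ℕ) : ℓ ≤ nuN N ℓ := by
  rw [nuN]
  have h1 : 2*(ℓ/2) ≤ N*(ℓ/2) := Nat.mul_le_mul_right _ hN
  omega

lemma Lf_zero (hN : 2 ≤ N) : Lf n N 0 = 1 := by
  rw [Lf]
  have : AdmF n N 0 = {[]} := by
    ext l
    simp only [AdmF, Finset.mem_filter, mem_WF, Finset.mem_singleton, List.length_eq_zero_iff]
    constructor
    · rintro ⟨h, -⟩; exact h
    · rintro rfl; exact ⟨rfl, adm'_nil hN⟩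
  rw [this, Finset.card_singleton]

lemma key (hN : 2 ≤ N) {m : ℕ} (hm : 1 ≤ m) :
    ∑ ℓ ∈ Finset.range (2*(m+1)), (-1:ℤ)^ℓ *
      (if nuN N ℓ ≤ m then (n.choose (nuN N ℓ) : ℤ) * (Lf n N (m - nuN N ℓ) : ℤ) else 0)
      = 0 := by
  rw [sum_range_two_mul]
  have hterm : ∀ i ∈ Finset.range (m+1),
      ((-1:ℤ)^(2*i) * (if nuN N (2*i) ≤ m then (n.choose (nuN N (2*i)) : ℤ) * (Lf n N (m - nuN N (2*i)) : ℤ) else 0)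
        + (-1:ℤ)^(2*i+1) * (if nuN N (2*i+1) ≤ m then (n.choose (nuN N (2*i+1)) : ℤ) * (Lf n N (m - nuN N (2*i+1)) : ℤ) else 0))
      = XI n N m i - YI n N m i := by
    intro i _
    have e1 : (2*i)/2 = i := by omega
    have e2 : (2*i) % 2 = 0 := by omega
    have e3 : (2*i+1)/2 = i := by omega
    have e4 : (2*i+1) % 2 = 1 := by omega
    have h1 : nuN N (2*i) = N*i := by rw [nuN, e1, e2, add_zero]
    have h2 : nuN N (2*i+1) = N*i+1 := by rw [nuN, e3, e4]
    have hp1 : (-1:ℤ)^(2*i) = 1 := by rw [pow_mul]; norm_num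
    have hp2 : (-1:ℤ)^(2*i+1) = -1 := by rw [pow_succ, hp1]; ring
    rw [h1, h2, hp1, hp2, XI, YI]
    ring
  rw [Finset.sum_congr rfl hterm, Finset.sum_range_succ']
  have htele := tele (n := n) hN m m
  rw [gI_vanish hN m, add_zero] at htele
  have hX0 : XI n N m 0 = (Lf n N m : ℤ) := by
    rw [XI]; simp
  have hY0 : YI n N m 0 = (n : ℤ) * (Lf n N (m-1) : ℤ) := by
    rw [YI]
    rw [if_pos (by omega : N*0+1 ≤ m)]
    simp [Nat.choose_one_right]
  have hE1 := E1 (n := n) (N := N) hN hm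
  have hcast : (n : ℤ) * (Lf n N (m-1) : ℤ) = (Lf n N m : ℤ) + gI n N m N := by
    rw [gI]
    split_ifs with h
    · rw [if_pos h] at hE1; exact_mod_cast hE1
    · rw [if_neg h] at hE1; rw [add_zero]; exact_mod_cast hE1
  rw [hX0, hY0]
  rw [← htele]
  linarith [hcast]

end AntiSym


/-- **Numerical Hilbert series identity for the `N`-antisymmetrizer algebra.**
`(∑_{k≥0} L(n,N,k) tᵏ) · (∑_{ℓ≥0} (-1)^ℓ C(n, ν_N(ℓ)) t^{ν_N(ℓ)}) = 1` in `ℤ[[t]]`. -/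
theorem antisymmetrizer_hilbert_series_identity (n N : ℕ) (h2 : 2 ≤ N) (hn : N ≤ n) :
    (PowerSeries.mk fun k => (Lword n N k : ℤ)) *
      (PowerSeries.mk fun j => ∑ ℓ ∈ Finset.range (j + 1),
        if nuN N ℓ = j then (-1 : ℤ) ^ ℓ * (Nat.choose n j : ℤ) else 0) = 1 := by
  apply PowerSeries.ext
  intro m
  rw [PowerSeries.coeff_mul, PowerSeries.coeff_one,
    Finset.Nat.sum_antidiagonal_eq_sum_range_succ_mk]
  simp only [PowerSeries.coeff_mk, AntiSym.Lword_eq_Lf]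
  by_cases hm : m = 0
  · subst hm
    rw [if_pos rfl, Finset.sum_range_one]
    simp [AntiSym.Lf_zero h2, nuN]
  · rw [if_neg hm]
    have hm1 : 1 ≤ m := Nat.one_le_iff_ne_zero.2 hm
    have hinner : ∀ k ∈ Finset.range (m+1),
        (AntiSym.Lf n N k : ℤ) * (∑ ℓ ∈ Finset.range ((m-k) + 1),
            if nuN N ℓ = m - k then (-1:ℤ)^ℓ * (n.choose (m-k) : ℤ) else 0)
        = ∑ ℓ ∈ Finset.range (m+1),
            (if nuN N ℓ = m - k then
              (-1:ℤ)^ℓ * (n.choose (m-k) : ℤ) * (AntiSym.Lf n N k : ℤ) else 0) := by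
      intro k hk
      rw [Finset.mem_range] at hk
      rw [Finset.mul_sum]
      have hz : ∀ ℓ ∈ Finset.range (m+1), ℓ ∉ Finset.range ((m-k)+1) →
          (AntiSym.Lf n N k : ℤ) *
            (if nuN N ℓ = m - k then (-1:ℤ)^ℓ * (n.choose (m-k) : ℤ) else 0) = 0 := by
        intro ℓ hℓ hℓn
        rw [Finset.mem_range] at hℓ
        rw [if_neg, mul_zero]
        intro hEq
        have hle := AntiSym.le_nuN h2 ℓ
        exact hℓn (Finset.mem_range.2 (by omega))
      rw [Finset.sum_subset (Finset.range_subset_range.2 (by omega : (m-k)+1 ≤ m+1)) hz]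
      apply Finset.sum_congr rfl
      intro ℓ _
      rw [mul_ite, mul_zero]
      congr 1
      ring
    rw [Finset.sum_congr rfl hinner, Finset.sum_comm]
    have houter : ∀ ℓ ∈ Finset.range (m+1),
        (∑ k ∈ Finset.range (m+1), if nuN N ℓ = m - k then
            (-1:ℤ)^ℓ * (n.choose (m-k) : ℤ) * (AntiSym.Lf n N k : ℤ) else 0)
        = (-1:ℤ)^ℓ * (if nuN N ℓ ≤ m then
            (n.choose (nuN N ℓ) : ℤ) * (AntiSym.Lf n N (m - nuN N ℓ) : ℤ) else 0) := by
      intro ℓ _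
      by_cases hν : nuN N ℓ ≤ m
      · rw [if_pos hν]
        rw [Finset.sum_eq_single (m - nuN N ℓ)]
        · rw [if_pos (by omega), show m - (m - nuN N ℓ) = nuN N ℓ by omega]
          ring
        · intro k hk hne
          rw [Finset.mem_range] at hk
          rw [if_neg]
          intro hEq
          exact hne (by omega)
        · intro habs
          exact absurd (Finset.mem_range.2 (by omega)) habs
      · rw [if_neg hν, mul_zero]
        apply Finset.sum_eq_zero
        intro k hk
        rw [Finset.mem_range] at hk
        rw [if_neg]
        intro hEq
        exact hν (by omega)
    rw [Finset.sum_congr rfl houter]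
    have hext : (∑ ℓ ∈ Finset.range (m+1), (-1:ℤ)^ℓ * (if nuN N ℓ ≤ m then
            (n.choose (nuN N ℓ) : ℤ) * (AntiSym.Lf n N (m - nuN N ℓ) : ℤ) else 0))
        = ∑ ℓ ∈ Finset.range (2*(m+1)), (-1:ℤ)^ℓ * (if nuN N ℓ ≤ m then
            (n.choose (nuN N ℓ) : ℤ) * (AntiSym.Lf n N (m - nuN N ℓ) : ℤ) else 0) := by
      apply Finset.sum_subset (Finset.range_subset_range.2 (by omega : m+1 ≤ 2*(m+1)))
      intro ℓ hℓ hℓn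
      rw [Finset.mem_range] at hℓ hℓn
      have hle := AntiSym.le_nuN h2 ℓ
      rw [if_neg (by omega), mul_zero]
    rw [hext]
    exact AntiSym.key h2 hm1
end
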